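/- With notation as in the context, for every $n \geq 1$: regarded as a rational function in the single variable $z_n$ over the field $F(z_1, \dots, z_{n-1})$, the function $J_n$ has no pole at $z_n = 0$, and its value at $z_n = 0$ equals $\gamma^{-1} \cdot J_{n-1}(z_1, \dots, z_{n-1})$. (This is the residue computation $\mathrm{Res}_{z_n = 0}\, J_n/z_n = \gamma^{-1} J_{n-1}$ from the proof of Lemma 3.3 of the paper.) -/

import Mathlib

open scoped BigOperators

noncomputable section

/-- `ζ(w) = (1 - w q₁)(1 - w q₂) / ((1 - w)(1 - w q₁ q₂))`. -/
def zetaF {L : Type*} [Field L] (q₁ q₂ w : L) : L :=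
  ((1 - w * q₁) * (1 - w * q₂)) / ((1 - w) * (1 - w * (q₁ * q₂)))

/-- The rational expression `J_n` of equation (3.34) of the paper, evaluated at
`z_1 = z 0, …, z_n = z (n-1)`, where `ι : F →+* L` embeds the field of constants.
(By convention `J_0 = 1`, which this definition satisfies as all products are empty.) -/
def Jfun {F L : Type*} [Field F] [Field L] (ι : F →+* L) (q₁ q₂ m : F)
    (r : ℕ) (x x' : Fin r → F) (n : ℕ) (z : ℕ → L) : L :=
  (ι q₁ * ι q₂) ^ (r * n) *
    ((∏ i ∈ Finset.range (n - 1), (1 - ι q₁ * ι q₂ * z (i + 1) / z i)) *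
      ∏ i ∈ Finset.range n, ∏ j ∈ Finset.Ico (i + 1) n, zetaF (ι q₁) (ι q₂) (z j / z i))⁻¹ *
    ∏ i ∈ Finset.range n,
      (∏ a : Fin r, (1 - ι (x' a) / (z i * (ι q₁ * ι q₂)))) /
        ∏ a : Fin r, (1 - ι m * ι (x a) / (z i * (ι q₁ * ι q₂)))

namespace Stmt4Aux

variable {K : Type*} [Field K]

theorem map_zetaF {L M : Type*} [Field L] [Field M] (g : L →+* M) (a b w : L) :
    g (zetaF a b w) = zetaF (g a) (g b) (g w) := by
  simp [zetaF, map_div₀]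

theorem eval0_key (p q : Polynomial K) (hq : Polynomial.eval 0 q ≠ 0)
    (f : RatFunc K) (hf : f = algebraMap (Polynomial K) (RatFunc K) p / algebraMap _ _ q) :
    Polynomial.eval 0 (RatFunc.denom f) ≠ 0 ∧
      Polynomial.eval 0 (RatFunc.num f) / Polynomial.eval 0 (RatFunc.denom f) =
        Polynomial.eval 0 p / Polynomial.eval 0 q := by
  have hq0 : q ≠ 0 := fun h => hq (by simp [h])
  have haq : algebraMap (Polynomial K) (RatFunc K) q ≠ 0 := RatFunc.algebraMap_ne_zero hq0
  have had : algebraMap (Polynomial K) (RatFunc K) f.denom ≠ 0 :=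
    RatFunc.algebraMap_ne_zero f.denom_ne_zero
  have key : f.num * q = p * f.denom := by
    have h1 : algebraMap (Polynomial K) (RatFunc K) f.num / algebraMap _ _ f.denom
        = algebraMap (Polynomial K) (RatFunc K) p / algebraMap _ _ q := by
      rw [RatFunc.num_div_denom, hf]
    rw [div_eq_div_iff had haq] at h1
    exact IsFractionRing.injective (Polynomial K) (RatFunc K) (by rw [map_mul, map_mul]; exact h1)
  have hdvd : f.denom ∣ q := by
    refine (RatFunc.isCoprime_num_denom f).symm.dvd_of_dvd_mul_left ?_
    exact ⟨p, by rw [key]; ring⟩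
  obtain ⟨t, ht⟩ := hdvd
  have htq : Polynomial.eval 0 f.denom * Polynomial.eval 0 t = Polynomial.eval 0 q := by
    rw [ht, Polynomial.eval_mul]
  have hd0 : Polynomial.eval 0 f.denom ≠ 0 := fun h => hq (by rw [← htq, h, zero_mul])
  have ht0 : Polynomial.eval 0 t ≠ 0 := fun h => hq (by rw [← htq, h, mul_zero])
  refine ⟨hd0, ?_⟩
  have hp : p = f.num * t := by
    have h3 : f.num * (f.denom * t) = p * f.denom := by rw [← ht]; exact key
    have h2 : f.num * t * f.denom = p * f.denom := by rw [← h3]; ring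
    exact (mul_right_cancel₀ f.denom_ne_zero h2).symm
  rw [hp, Polynomial.eval_mul, ← htq]
  field_simp

def Good (f : RatFunc K) (v : K) : Prop :=
  ∃ p q : Polynomial K, Polynomial.eval 0 p ≠ 0 ∧ Polynomial.eval 0 q ≠ 0 ∧
    f = algebraMap (Polynomial K) (RatFunc K) p / algebraMap _ _ q ∧
    Polynomial.eval 0 p / Polynomial.eval 0 q = v

theorem good_one : Good (1 : RatFunc K) 1 :=
  ⟨1, 1, by simp, by simp, by simp, by simp⟩

theorem good_mul {f g : RatFunc K} {v w : K} (hf : Good f v) (hg : Good g w) :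
    Good (f * g) (v * w) := by
  obtain ⟨p, q, hp, hq, hfe, hv⟩ := hf
  obtain ⟨p', q', hp', hq', hge, hw⟩ := hg
  refine ⟨p * p', q * q', by simp [hp, hp'], by simp [hq, hq'], ?_, ?_⟩
  · rw [hfe, hge, map_mul, map_mul, div_mul_div_comm]
  · rw [Polynomial.eval_mul, Polynomial.eval_mul, ← hv, ← hw]; field_simp

theorem good_inv {f : RatFunc K} {v : K} (hf : Good f v) : Good f⁻¹ v⁻¹ := by
  obtain ⟨p, q, hp, hq, hfe, hv⟩ := hf
  exact ⟨q, p, hq, hp, by rw [hfe, inv_div], by rw [← hv, inv_div]⟩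

theorem good_div {f g : RatFunc K} {v w : K} (hf : Good f v) (hg : Good g w) :
    Good (f / g) (v / w) := by
  rw [div_eq_mul_inv, div_eq_mul_inv]
  exact good_mul hf (good_inv hg)

theorem good_prod {α : Type*} (s : Finset α) (f : α → RatFunc K) (v : α → K)
    (h : ∀ i ∈ s, Good (f i) (v i)) :
    Good (∏ i ∈ s, f i) (∏ i ∈ s, v i) := by
  classical
  induction s using Finset.induction_on with
  | empty => simpa using good_one
  | insert _ _ hnot ih =>
    rw [Finset.prod_insert hnot, Finset.prod_insert hnot]
    exact good_mul (h _ (Finset.mem_insert_self _ _))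
      (ih fun i hi => h _ (Finset.mem_insert_of_mem hi))

theorem lin_eq (a c : K) (hc : c ≠ 0) :
    (1 - RatFunc.C a * RatFunc.X / RatFunc.C c : RatFunc K) =
      algebraMap (Polynomial K) (RatFunc K) (1 - Polynomial.C (a * c⁻¹) * Polynomial.X) := by
  have hCc : (RatFunc.C c : RatFunc K) ≠ 0 := by
    simpa using (map_ne_zero_iff _ (RingHom.injective (RatFunc.C : K →+* RatFunc K))).mpr hc
  rw [map_sub, map_one, map_mul, RatFunc.algebraMap_C, RatFunc.algebraMap_X, map_mul, map_inv₀]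
  field_simp

theorem good_lin (a c : K) (hc : c ≠ 0) :
    Good (1 - RatFunc.C a * RatFunc.X / RatFunc.C c : RatFunc K) 1 := by
  refine ⟨1 - Polynomial.C (a * c⁻¹) * Polynomial.X, 1, by simp, by simp,
    by rw [lin_eq a c hc]; simp, by simp⟩

theorem good_zeta (k₁ k₂ c : K) (hc : c ≠ 0) :
    Good (zetaF (RatFunc.C k₁) (RatFunc.C k₂) (RatFunc.X / RatFunc.C c)) 1 := by
  have hz : zetaF (RatFunc.C k₁) (RatFunc.C k₂) (RatFunc.X / RatFunc.C c) =
      ((1 - RatFunc.C k₁ * RatFunc.X / RatFunc.C c) *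
        (1 - RatFunc.C k₂ * RatFunc.X / RatFunc.C c)) /
      ((1 - RatFunc.C 1 * RatFunc.X / RatFunc.C c) *
        (1 - RatFunc.C (k₁ * k₂) * RatFunc.X / RatFunc.C c)) := by
    rw [zetaF, map_mul, map_one]; ring_nf
  rw [hz]
  have := good_div (good_mul (good_lin k₁ c hc) (good_lin k₂ c hc))
    (good_mul (good_lin 1 c hc) (good_lin (k₁ * k₂) c hc))
  simpa using this

theorem last_eq {r : ℕ} (y : Fin r → K) (k : K) (hk : k ≠ 0) :
    (∏ a : Fin r, (1 - RatFunc.C (y a) / (RatFunc.X * RatFunc.C k))) =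
      algebraMap (Polynomial K) (RatFunc K)
        (∏ a : Fin r, (Polynomial.X - Polynomial.C (y a * k⁻¹))) / RatFunc.X ^ r := by
  have hCk : (RatFunc.C k : RatFunc K) ≠ 0 :=
    (map_ne_zero_iff _ (RingHom.injective (RatFunc.C : K →+* RatFunc K))).mpr hk
  have hX : (RatFunc.X : RatFunc K) ≠ 0 := RatFunc.X_ne_zero
  rw [map_prod]
  have hXr : (RatFunc.X : RatFunc K) ^ r = ∏ _a : Fin r, RatFunc.X := by
    simp [Finset.prod_const]
  rw [hXr, ← Finset.prod_div_distrib]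
  refine Finset.prod_congr rfl fun a _ => ?_
  rw [map_sub, RatFunc.algebraMap_X, RatFunc.algebraMap_C, map_mul, map_inv₀]
  have h2 : RatFunc.C (y a) / (RatFunc.X * RatFunc.C k) =
      RatFunc.C (y a) * (RatFunc.C k)⁻¹ / RatFunc.X := by
    rw [div_eq_div_iff (mul_ne_zero hX hCk) hX]
    field_simp
  rw [h2, one_sub_div hX]

theorem good_last {r : ℕ} (y w : Fin r → K) (k : K) (hy : ∀ a, y a ≠ 0)
    (hw : ∀ a, w a ≠ 0) (hk : k ≠ 0) :
    Good ((∏ a : Fin r, (1 - RatFunc.C (y a) / (RatFunc.X * RatFunc.C k))) /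
        (∏ a : Fin r, (1 - RatFunc.C (w a) / (RatFunc.X * RatFunc.C k))))
      ((∏ a : Fin r, y a) / (∏ a : Fin r, w a)) := by
  have hX : (RatFunc.X : RatFunc K) ^ r ≠ 0 := pow_ne_zero _ RatFunc.X_ne_zero
  have ev : ∀ u : Fin r → K,
      Polynomial.eval 0 (∏ a : Fin r, (Polynomial.X - Polynomial.C (u a * k⁻¹))) =
        (-k⁻¹) ^ r * ∏ a : Fin r, u a := by
    intro u
    rw [Polynomial.eval_prod]
    have : ∀ a : Fin r, Polynomial.eval 0 (Polynomial.X - Polynomial.C (u a * k⁻¹)) =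
        (-k⁻¹) * u a := by intro a; simp; ring
    rw [Finset.prod_congr rfl fun a _ => this a, Finset.prod_mul_distrib]
    simp [Finset.prod_const]
  have hkr : ((-k⁻¹ : K)) ^ r ≠ 0 := pow_ne_zero _ (neg_ne_zero.mpr (inv_ne_zero hk))
  refine ⟨∏ a : Fin r, (Polynomial.X - Polynomial.C (y a * k⁻¹)),
    ∏ a : Fin r, (Polynomial.X - Polynomial.C (w a * k⁻¹)), ?_, ?_, ?_, ?_⟩
  · rw [ev]; exact mul_ne_zero hkr (Finset.prod_ne_zero_iff.mpr fun a _ => hy a)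
  · rw [ev]; exact mul_ne_zero hkr (Finset.prod_ne_zero_iff.mpr fun a _ => hw a)
  · rw [last_eq y k hk, last_eq w k hk]
    rw [div_div_div_cancel_right₀ hX]
  · rw [ev, ev, mul_div_mul_left _ _ hkr]

end Stmt4Aux

set_option maxHeartbeats 2000000 in
set_option synthInstance.maxHeartbeats 1000000 in
open Stmt4Aux in
/-- Regarded as a rational function in the single variable `z_n` over the
field `F(z_1, …, z_{n-1})`, the function `J_n` has no pole at `z_n = 0`, and its value at
`z_n = 0` equals `γ⁻¹ ⬝ J_{n-1}(z_1, …, z_{n-1})`, where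
`γ = m^r ∏ x_a / (q^r ∏ x'_a)`. -/
theorem stmt_4 {F : Type} [Field F] (r : ℕ) (hr : 1 ≤ r) (q₁ q₂ m : F)
    (x x' : Fin r → F) (hq₁ : q₁ ≠ 0) (hq₂ : q₂ ≠ 0) (hm : m ≠ 0)
    (hx : ∀ a, x a ≠ 0) (hx' : ∀ a, x' a ≠ 0) (n : ℕ) (hn : 1 ≤ n) :
    -- `K = F(z_1, …, z_{n-1})`, the rational function field in the variables other than `z_n`
    let K := FractionRing (MvPolynomial {j : ℕ // j < n ∧ j ≠ n - 1} F)
    let ιK : F →+* K :=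
      (algebraMap (MvPolynomial {j : ℕ // j < n ∧ j ≠ n - 1} F) K).comp MvPolynomial.C
    let Z : {j : ℕ // j < n ∧ j ≠ n - 1} → K := fun s =>
      algebraMap (MvPolynomial {j : ℕ // j < n ∧ j ≠ n - 1} F) K (MvPolynomial.X s)
    -- `J_n`, regarded as a one-variable rational function in `z_n` over `K`
    let Jn : RatFunc K := Jfun ((RatFunc.C).comp ιK) q₁ q₂ m r x x' n
      (fun j => if h : j < n ∧ j ≠ n - 1 then RatFunc.C (Z ⟨j, h⟩) else RatFunc.X)
    -- `J_{n-1}(z_1, …, z_{n-1})`, an element of `K`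
    let Jprev : K := Jfun ιK q₁ q₂ m r x x' (n - 1)
      (fun j => if h : j < n ∧ j ≠ n - 1 then Z ⟨j, h⟩ else 1)
    -- no pole at `z_n = 0`, and the value there is `γ⁻¹ ⬝ J_{n-1}`
    Polynomial.eval 0 (RatFunc.denom Jn) ≠ 0 ∧
      Polynomial.eval 0 (RatFunc.num Jn) / Polynomial.eval 0 (RatFunc.denom Jn) =
        (ιK ((m ^ r * ∏ a : Fin r, x a) / ((q₁ * q₂) ^ r * ∏ a : Fin r, x' a)))⁻¹ * Jprev := by
  obtain ⟨N, rfl⟩ : ∃ N, n = N + 1 := ⟨n - 1, (Nat.succ_pred_eq_of_pos hn).symm⟩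
  intro K ιK Z Jn Jprev
  have hιK : Function.Injective ιK := RingHom.injective ιK
  have hι : ∀ {a : F}, a ≠ 0 → ιK a ≠ 0 := fun ha => (map_ne_zero_iff ιK hιK).mpr ha
  set qK : K := ιK q₁ * ιK q₂ with hqKdef
  have hqK : qK ≠ 0 := mul_ne_zero (hι hq₁) (hι hq₂)
  have hZ : ∀ s, Z s ≠ 0 := by
    intro s h0
    exact MvPolynomial.X_ne_zero s (IsFractionRing.to_map_eq_zero_iff.mp h0)
  set c : ℕ → K := fun j => if h : j < N + 1 ∧ j ≠ N then Z ⟨j, h⟩ else 1 with hcdef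
  have hc : ∀ j, c j ≠ 0 := by
    intro j
    simp only [hcdef]
    split
    · exact hZ _
    · exact one_ne_zero
  set zh : ℕ → RatFunc K :=
    fun j => if h : j < N + 1 ∧ j ≠ N then RatFunc.C (Z ⟨j, h⟩) else RatFunc.X with hzhdef
  have hJn : Jn = Jfun (RatFunc.C.comp ιK) q₁ q₂ m r x x' (N + 1) zh := rfl
  have hJp : Jprev = Jfun ιK q₁ q₂ m r x x' N c := rfl
  have hzc : ∀ j, j < N → zh j = RatFunc.C (c j) := by
    intro j hj
    have h : j < N + 1 ∧ j ≠ N := ⟨Nat.lt_succ_of_lt hj, Nat.ne_of_lt hj⟩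
    simp only [hzhdef, hcdef]
    rw [dif_pos h, dif_pos h]
  have hzN : zh N = RatFunc.X := by
    simp only [hzhdef]
    rw [dif_neg]
    simp
  clear_value Jn Jprev zh c qK
  set Wz : RatFunc K := ∏ i ∈ Finset.range N,
    zetaF (RatFunc.C (ιK q₁)) (RatFunc.C (ιK q₂)) (RatFunc.X / RatFunc.C (c i)) with hWz
  set FN : RatFunc K :=
    (∏ a : Fin r, (1 - RatFunc.C (ιK (x' a)) / (RatFunc.X * RatFunc.C qK))) /
      (∏ a : Fin r, (1 - RatFunc.C (ιK m * ιK (x a)) / (RatFunc.X * RatFunc.C qK))) with hFN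
  set b₀ : RatFunc K :=
    if N = 0 then 1 else 1 - RatFunc.C qK * RatFunc.X / RatFunc.C (c (N - 1)) with hb₀
  have hP3 : (∏ i ∈ Finset.range (N + 1),
        (∏ a : Fin r, (1 - (RatFunc.C.comp ιK) (x' a) /
            (zh i * ((RatFunc.C.comp ιK) q₁ * (RatFunc.C.comp ιK) q₂)))) /
          ∏ a : Fin r, (1 - (RatFunc.C.comp ιK) m * (RatFunc.C.comp ιK) (x a) /
            (zh i * ((RatFunc.C.comp ιK) q₁ * (RatFunc.C.comp ιK) q₂)))) =
      RatFunc.C (∏ i ∈ Finset.range N,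
        (∏ a : Fin r, (1 - ιK (x' a) / (c i * (ιK q₁ * ιK q₂)))) /
          ∏ a : Fin r, (1 - ιK m * ιK (x a) / (c i * (ιK q₁ * ιK q₂)))) * FN := by
    rw [Finset.prod_range_succ]
    congr 1
    · rw [map_prod]
      refine Finset.prod_congr rfl fun i hi => ?_
      rw [Finset.mem_range] at hi
      rw [hzc i hi]
      simp only [RingHom.comp_apply, map_div₀, map_prod, map_sub, map_one, map_mul]
    · rw [hzN]
      simp only [hFN, hqKdef, RingHom.comp_apply, map_mul]
  have hP1 : (∏ i ∈ Finset.range N,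
        (1 - (RatFunc.C.comp ιK) q₁ * (RatFunc.C.comp ιK) q₂ * zh (i + 1) / zh i)) =
      RatFunc.C (∏ i ∈ Finset.range (N - 1), (1 - ιK q₁ * ιK q₂ * c (i + 1) / c i)) * b₀ := by
    by_cases hN : N = 0
    · simp only [hb₀, if_pos hN, hN]
      simp
    · obtain ⟨M, hM⟩ : ∃ M, N = M + 1 :=
        ⟨N - 1, (Nat.succ_pred_eq_of_pos (Nat.pos_of_ne_zero hN)).symm⟩
      simp only [hb₀, if_neg hN]
      have hzM1 : zh (M + 1) = RatFunc.X := by rw [← hM]; exact hzN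
      have hzM : zh M = RatFunc.C (c M) := hzc M (by omega)
      rw [show Finset.range N = Finset.range (M + 1) by rw [hM], Finset.prod_range_succ,
        show N - 1 = M by omega]
      congr 1
      · rw [map_prod]
        refine Finset.prod_congr rfl fun i hi => ?_
        rw [Finset.mem_range] at hi
        rw [hzc i (by omega), hzc (i + 1) (by omega)]
        simp only [RingHom.comp_apply, map_sub, map_one, map_mul, map_div₀]
      · rw [hzM1, hzM]
        simp only [hqKdef, RingHom.comp_apply, map_mul]
  have hP2 : (∏ i ∈ Finset.range (N + 1), ∏ j ∈ Finset.Ico (i + 1) (N + 1),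
        zetaF ((RatFunc.C.comp ιK) q₁) ((RatFunc.C.comp ιK) q₂) (zh j / zh i)) =
      RatFunc.C (∏ i ∈ Finset.range N, ∏ j ∈ Finset.Ico (i + 1) N,
        zetaF (ιK q₁) (ιK q₂) (c j / c i)) * Wz := by
    rw [Finset.prod_range_succ]
    have inner : ∀ i ∈ Finset.range N,
        (∏ j ∈ Finset.Ico (i + 1) (N + 1),
          zetaF ((RatFunc.C.comp ιK) q₁) ((RatFunc.C.comp ιK) q₂) (zh j / zh i)) =
        RatFunc.C (∏ j ∈ Finset.Ico (i + 1) N, zetaF (ιK q₁) (ιK q₂) (c j / c i)) *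
          zetaF (RatFunc.C (ιK q₁)) (RatFunc.C (ιK q₂)) (RatFunc.X / RatFunc.C (c i)) := by
      intro i hi
      rw [Finset.mem_range] at hi
      rw [Finset.prod_Ico_succ_top hi]
      congr 1
      · rw [map_prod]
        refine Finset.prod_congr rfl fun j hj => ?_
        rw [Finset.mem_Ico] at hj
        rw [hzc j hj.2, hzc i hi, map_zetaF, map_div₀]
        simp only [RingHom.comp_apply]
      · rw [hzN, hzc i hi]
        simp only [RingHom.comp_apply]
    rw [Finset.prod_congr rfl inner, Finset.prod_mul_distrib, map_prod]
    simp [hWz]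
  have key : Jn = RatFunc.C (qK ^ r * Jprev) * ((b₀ * Wz)⁻¹ * FN) := by
    rw [hJn, hJp]
    simp only [Jfun, Nat.add_sub_cancel]
    rw [hP1, hP2, hP3]
    simp only [hqKdef, map_mul, map_pow, map_inv₀, RingHom.comp_apply]
    ring
  have good_b : Good b₀ 1 := by
    by_cases hN : N = 0
    · simp only [hb₀, if_pos hN]; exact good_one
    · simp only [hb₀, if_neg hN]; exact good_lin _ _ (hc _)
  have good_Wz : Good Wz 1 := by
    have h := good_prod (Finset.range N) _ (fun _ => 1)
      (fun i _ => good_zeta (ιK q₁) (ιK q₂) (c i) (hc i))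
    rw [hWz]
    simpa using h
  have good_FN : Good FN ((∏ a : Fin r, ιK (x' a)) / (∏ a : Fin r, (ιK m * ιK (x a)))) := by
    rw [hFN]
    exact good_last _ _ _ (fun a => hι (hx' a))
      (fun a => mul_ne_zero (hι hm) (hι (hx a))) hqK
  have good_W : Good ((b₀ * Wz)⁻¹ * FN)
      ((∏ a : Fin r, ιK (x' a)) / (∏ a : Fin r, (ιK m * ιK (x a)))) := by
    have h := good_mul (good_inv (good_mul good_b good_Wz)) good_FN
    simpa using h
  obtain ⟨p, qq, hp0, hq0, hfq, hval⟩ := good_W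
  have hJnpq : Jn = algebraMap (Polynomial K) (RatFunc K) (Polynomial.C (qK ^ r * Jprev) * p) /
      algebraMap _ _ qq := by
    rw [key, hfq,
      show algebraMap (Polynomial K) (RatFunc K) (Polynomial.C (qK ^ r * Jprev) * p) =
        RatFunc.C (qK ^ r * Jprev) * algebraMap (Polynomial K) (RatFunc K) p by
          rw [map_mul, RatFunc.algebraMap_C],
      mul_div_assoc]
  obtain ⟨h1, h2⟩ := eval0_key _ _ hq0 Jn hJnpq
  refine ⟨h1, ?_⟩
  rw [h2, Polynomial.eval_mul, Polynomial.eval_C, mul_div_assoc, hval]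
  have hprodm : (∏ a : Fin r, (ιK m * ιK (x a))) = ιK m ^ r * ∏ a : Fin r, ιK (x a) := by
    rw [Finset.prod_mul_distrib, Finset.prod_const, Finset.card_univ, Fintype.card_fin]
  have hγ : (ιK ((m ^ r * ∏ a : Fin r, x a) / ((q₁ * q₂) ^ r * ∏ a : Fin r, x' a)))⁻¹ =
      qK ^ r * ((∏ a : Fin r, ιK (x' a)) / (∏ a : Fin r, (ιK m * ιK (x a)))) := by
    rw [map_div₀, map_mul, map_mul, map_pow, map_pow, map_prod, map_prod, map_mul, inv_div,
      hqKdef, hprodm, mul_div_assoc]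
  rw [hγ]
  ring
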